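/- Let n ≥ 1 and let φ₁, φ₂ ∈ H^∞(𝔻^n) be inner functions depending on disjoint sets of variables, and set T = T_{φ₁}* T_{φ₂} on H²(𝔻^n). Then T T* = T_{φ₁}* T_{φ₁} T_{φ₂} T_{φ₂}* = the orthogonal projection of H²(𝔻^n) onto φ₂ H²(𝔻^n), and T* T = T_{φ₁} T_{φ₁}* = the orthogonal projection of H²(𝔻^n) onto φ₁ H²(𝔻^n). In particular, T is a partial isometry with final space φ₂ H²(𝔻^n) and initial space φ₁ H²(𝔻^n). -/

import Mathlib

noncomputable section

open MeasureTheory Complex Filter Topology ContinuousLinearMap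

/-- The `n`-torus `𝕋^n`, with its (normalized, since `T = 1`) Haar measure. -/
abbrev Torus (n : ℕ) : Type := Fin n → UnitAddCircle

/-- The Lebesgue space `L²(𝕋^n)`. -/
abbrev L2T (n : ℕ) : Type := Lp ℂ 2 (volume : Measure (Torus n))

/-- The character `z ↦ z^k` on the `n`-torus, `k ∈ ℤ^n`. -/
def charFn (n : ℕ) (k : Fin n → ℤ) : Torus n → ℂ := fun z => ∏ i, fourier (k i) (z i)

theorem charFn_continuous (n : ℕ) (k : Fin n → ℤ) : Continuous (charFn n k) :=
  continuous_finset_prod _ fun i _ => (map_continuous (fourier (k i))).comp (continuous_apply i)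

theorem charFn_norm (n : ℕ) (k : Fin n → ℤ) (z : Torus n) : ‖charFn n k z‖ = 1 := by
  rw [charFn, norm_prod]
  exact Finset.prod_eq_one fun i _ => Circle.norm_coe _

theorem charFn_memℒp (n : ℕ) (k : Fin n → ℤ) :
    MemLp (charFn n k) ⊤ (volume : Measure (Torus n)) :=
  memLp_top_of_bound (charFn_continuous n k).aestronglyMeasurable 1
    (Eventually.of_forall fun z => le_of_eq (charFn_norm n k z))

/-- The `k`-th Fourier coefficient `f̂(k) = ∫_{𝕋^n} (conj z^k) f(z) dm(z)`. -/
def mFourierCoeff {n : ℕ} (f : Torus n → ℂ) (k : Fin n → ℤ) : ℂ :=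
  ∫ z, (starRingEnd ℂ) (charFn n k z) * f z

theorem mFourierCoeff_congr {n : ℕ} {f g : Torus n → ℂ}
    (h : f =ᵐ[(volume : Measure (Torus n))] g) (k : Fin n → ℤ) :
    mFourierCoeff f k = mFourierCoeff g k :=
  integral_congr_ae (h.mono fun z hz => by simp only [hz])

theorem integrable_char_mul (n : ℕ) (k : Fin n → ℤ) (f : L2T n) :
    Integrable (fun z => (starRingEnd ℂ) (charFn n k z) * f z)
      (volume : Measure (Torus n)) := by
  have hf : Integrable (⇑f) (volume : Measure (Torus n)) := (Lp.memLp f).integrable one_le_two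
  refine hf.bdd_mul (c := 1) ?_ (Eventually.of_forall fun z => ?_)
  · exact (continuous_star.comp (charFn_continuous n k)).aestronglyMeasurable
  · rw [starRingEnd_apply, norm_star, charFn_norm]

theorem mFourierCoeff_add {n : ℕ} (k : Fin n → ℤ) (f g : L2T n) :
    mFourierCoeff (⇑(f + g)) k = mFourierCoeff (⇑f) k + mFourierCoeff (⇑g) k := by
  rw [mFourierCoeff_congr (Lp.coeFn_add f g) k]
  unfold mFourierCoeff
  simp only [Pi.add_apply, mul_add]
  exact integral_add (integrable_char_mul n k f) (integrable_char_mul n k g)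

theorem mFourierCoeff_smul {n : ℕ} (k : Fin n → ℤ) (c : ℂ) (f : L2T n) :
    mFourierCoeff (⇑(c • f)) k = c * mFourierCoeff (⇑f) k := by
  rw [mFourierCoeff_congr (Lp.coeFn_smul c f) k]
  unfold mFourierCoeff
  have : (fun z => (starRingEnd ℂ) (charFn n k z) * (c • ⇑f) z) =
      fun z => c • ((starRingEnd ℂ) (charFn n k z) * f z) := by
    funext z; simp only [Pi.smul_apply, smul_eq_mul]; ring
  rw [this, integral_smul, smul_eq_mul]

/-- All Fourier coefficients with some negative index vanish (membership in the "analytic"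
part, e.g. `H²(𝕋^n)` resp. `H^∞(𝔻^n)` for `L²` resp. `L^∞` functions). -/
def IsAnalyticSymbol {n : ℕ} (φ : Torus n → ℂ) : Prop :=
  ∀ k : Fin n → ℤ, (∃ i, k i < 0) → mFourierCoeff φ k = 0

/-- `φ ∈ H^∞(𝔻^n) = L^∞(𝕋^n) ∩ H²(𝕋^n)`. -/
def IsHinfty {n : ℕ} (φ : Torus n → ℂ) : Prop :=
  MemLp φ ⊤ (volume : Measure (Torus n)) ∧ IsAnalyticSymbol φ

/-- `φ` is an inner function in `H^∞(𝔻^n)`: it is in `H^∞` and unimodular a.e. on `𝕋^n`. -/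
def IsInnerFn {n : ℕ} (φ : Torus n → ℂ) : Prop :=
  IsHinfty φ ∧ ∀ᵐ z ∂(volume : Measure (Torus n)), ‖φ z‖ = 1

/-- `φ` depends only on the variables in `A`: `φ̂(k) = 0` whenever `k j ≠ 0` for some `j ∉ A`. -/
def DependsOnlyOn {n : ℕ} (φ : Torus n → ℂ) (A : Set (Fin n)) : Prop :=
  ∀ k : Fin n → ℤ, (∃ j, j ∉ A ∧ k j ≠ 0) → mFourierCoeff φ k = 0

/-- The Hardy space `H²(𝔻^n) ≅ H²(𝕋^n)` as a subspace of `L²(𝕋^n)`. -/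
def hardySpace (n : ℕ) : Submodule ℂ (L2T n) where
  carrier := {f : L2T n | ∀ k : Fin n → ℤ, (∃ i, k i < 0) → mFourierCoeff (⇑f) k = 0}
  add_mem' := by
    intro a b ha hb k hk
    rw [mFourierCoeff_add k a b, ha k hk, hb k hk, add_zero]
  zero_mem' := by
    intro k hk
    rw [mFourierCoeff_congr (Lp.coeFn_zero ℂ 2 (volume : Measure (Torus _))) k]
    simp [mFourierCoeff]
  smul_mem' := by
    intro c a ha k hk
    rw [mFourierCoeff_smul k c a, ha k hk, mul_zero]

/-- The character `z^k` as an element of `L²(𝕋^n)`. -/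
def charLp2 (n : ℕ) (k : Fin n → ℤ) : L2T n :=
  MemLp.toLp (charFn n k) ((charFn_memℒp n k).mono_exponent le_top)

theorem mFourierCoeff_eq_inner (n : ℕ) (k : Fin n → ℤ) (f : L2T n) :
    mFourierCoeff (⇑f) k = @inner ℂ _ _ (charLp2 n k) f := by
  rw [mFourierCoeff, MeasureTheory.L2.inner_def]
  apply integral_congr_ae
  have hcoe : ⇑(charLp2 n k) =ᵐ[(volume : Measure (Torus n))] charFn n k :=
    MemLp.coeFn_toLp _
  filter_upwards [hcoe] with z hz
  rw [RCLike.inner_apply, hz, mul_comm]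

theorem hardySpace_isClosed (n : ℕ) :
    IsClosed ((hardySpace n : Submodule ℂ (L2T n)) : Set (L2T n)) := by
  have h : ((hardySpace n : Submodule ℂ (L2T n)) : Set (L2T n)) =
      ⋂ k ∈ {k : Fin n → ℤ | ∃ i, k i < 0},
        {f : L2T n | @inner ℂ _ _ (charLp2 n k) f = 0} := by
    ext f
    simp only [Set.mem_iInter, Set.mem_setOf_eq, SetLike.mem_coe]
    constructor
    · intro hf k hk
      rw [← mFourierCoeff_eq_inner]; exact hf k hk
    · intro hf k hk
      rw [mFourierCoeff_eq_inner]; exact hf k hk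
  rw [h]
  exact isClosed_biInter fun k _ =>
    isClosed_eq (Continuous.inner continuous_const continuous_id) continuous_const

instance hardySpace_completeSpace (n : ℕ) : CompleteSpace (hardySpace n) :=
  (hardySpace_isClosed n).completeSpace_coe

/-- The Hardy space as a Hilbert space. -/
abbrev HardyH (n : ℕ) := ↥(hardySpace n)

/-- The representative function of an element of the Hardy space. -/
def repFn {n : ℕ} (f : HardyH n) : Torus n → ℂ := ⇑(f : L2T n)

theorem mul_memℒp {n : ℕ} {φ : Torus n → ℂ} (hφ : MemLp φ ⊤ (volume : Measure (Torus n)))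
    (f : L2T n) : MemLp (fun z => φ z * f z) 2 (volume : Measure (Torus n)) := by
  exact MemLp.mul' (Lp.memLp f) hφ

/-- Multiplication by `φ ∈ L^∞(𝕋^n)` as a map on `L²(𝕋^n)`. -/
def mulL2 {n : ℕ} (φ : Torus n → ℂ) (hφ : MemLp φ ⊤ (volume : Measure (Torus n)))
    (f : L2T n) : L2T n :=
  MemLp.toLp (fun z => φ z * f z) (mul_memℒp hφ f)

/-- `IsToeplitz φ hφ T` : `T` is the Toeplitz operator on `H²(𝔻^n)` with symbol
`φ ∈ L^∞(𝕋^n)`, i.e. `T f = P(φ f)` where `P` is the orthogonal projection onto `H²`. -/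
def IsToeplitz {n : ℕ} (φ : Torus n → ℂ) (hφ : MemLp φ ⊤ (volume : Measure (Torus n)))
    (T : HardyH n →L[ℂ] HardyH n) : Prop :=
  ∀ f : HardyH n, T f = Submodule.orthogonalProjectionOnto (hardySpace n) (mulL2 φ hφ (f : L2T n))

/-- `IsMulOp φ T` : `T` is the multiplication operator `M_φ` on `H²(𝔻^n)`. -/
def IsMulOp {n : ℕ} (φ : Torus n → ℂ) (T : HardyH n →L[ℂ] HardyH n) : Prop :=
  ∀ f : HardyH n, repFn (T f) =ᵐ[(volume : Measure (Torus n))] fun z => φ z * repFn f z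

/-- A bounded operator is a partial isometry if it is isometric on the orthogonal
complement of its kernel. -/
def IsPartialIsometryOp {E F : Type*} [NormedAddCommGroup E] [InnerProductSpace ℂ E]
    [NormedAddCommGroup F] [NormedSpace ℂ F] (T : E →L[ℂ] F) : Prop :=
  ∀ x ∈ (LinearMap.ker (T : E →ₗ[ℂ] F))ᗮ, ‖T x‖ = ‖x‖

/-- Hyponormality: `T*T - TT* ≥ 0`. -/
def IsHyponormal {H : Type*} [NormedAddCommGroup H] [InnerProductSpace ℂ H] [CompleteSpace H]
    (T : H →L[ℂ] H) : Prop :=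
  (ContinuousLinearMap.adjoint T ∘L T - T ∘L ContinuousLinearMap.adjoint T).IsPositive

/-- A shift: an isometry whose adjoint powers tend to `0` strongly. -/
def IsShiftOp {H : Type*} [NormedAddCommGroup H] [InnerProductSpace ℂ H] [CompleteSpace H]
    (V : H →L[ℂ] H) : Prop :=
  Isometry V ∧ ∀ x : H, Tendsto (fun m : ℕ => ((ContinuousLinearMap.adjoint V) ^ m) x) atTop (nhds 0)

/-- `g ∈ θ · H²(𝔻^n)`, i.e. `g = θ h` a.e. for some `h ∈ H²(𝔻^n)`. -/
def InMulRange {n : ℕ} (θ : Torus n → ℂ) (g : HardyH n) : Prop :=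
  ∃ h : HardyH n, repFn g =ᵐ[(volume : Measure (Torus n))] fun z => θ z * repFn h z

/-- `P` is the orthogonal projection of `H²(𝔻^n)` onto `θ H²(𝔻^n)`. -/
def IsOrthProjOntoMul {n : ℕ} (P : HardyH n →L[ℂ] HardyH n) (θ : Torus n → ℂ) : Prop :=
  IsIdempotentElem P ∧ IsSelfAdjoint P ∧
    ∀ g : HardyH n, g ∈ LinearMap.range (P : HardyH n →ₗ[ℂ] HardyH n) ↔ InMulRange θ g

/-! ### Auxiliary development -/

section Aux
open Set Submodule

local notation "⟪" x ", " y "⟫" => @inner ℂ _ _ x y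

instance factzerolt1 : Fact ((0:ℝ) < 1) := ⟨zero_lt_one⟩

theorem vol_eq_haar :
    (volume : Measure UnitAddCircle) = (AddCircle.haarAddCircle : Measure UnitAddCircle) := by
  rw [AddCircle.volume_eq_smul_haarAddCircle]; simp

instance : IsProbabilityMeasure (volume : Measure UnitAddCircle) := by
  rw [vol_eq_haar]; infer_instance

variable {n : ℕ}

theorem charFn_zero : charFn n 0 = fun _ => 1 := by
  funext z; simp [charFn, fourier_zero]

theorem charFn_mul (k l : Fin n → ℤ) (z : Torus n) :
    charFn n k z * charFn n l z = charFn n (k + l) z := by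
  rw [charFn, charFn, charFn, ← Finset.prod_mul_distrib]
  exact Finset.prod_congr rfl fun i _ => by rw [Pi.add_apply, fourier_add]

theorem charFn_conj (k : Fin n → ℤ) (z : Torus n) :
    (starRingEnd ℂ) (charFn n k z) = charFn n (-k) z := by
  rw [charFn, charFn, map_prod]
  exact Finset.prod_congr rfl fun i _ => by rw [← fourier_neg, Pi.neg_apply]

theorem int_fourier (m : ℤ) : ∫ x : UnitAddCircle, fourier m x = if m = 0 then 1 else 0 := by
  split_ifs with h
  · simp [h]
  · rw [vol_eq_haar]
    exact integral_eq_zero_of_add_right_eq_neg (μ := AddCircle.haarAddCircle)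
      (fourier_add_half_inv_index h one_pos)

theorem integral_charFn (k : Fin n → ℤ) :
    ∫ z : Torus n, charFn n k z = if k = 0 then 1 else 0 := by
  have : ∫ z : Torus n, charFn n k z = ∏ i, ∫ x : UnitAddCircle, fourier (k i) x := by
    rw [← MeasureTheory.integral_fintype_prod_eq_prod
      (f := fun i (x : UnitAddCircle) => (fourier (k i) x : ℂ))]
    rfl
  rw [this]
  split_ifs with h
  · refine Finset.prod_eq_one fun i _ => by rw [int_fourier, if_pos (by simp [h])]
  · obtain ⟨i, hi⟩ : ∃ i, k i ≠ 0 := by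
      by_contra hc; push_neg at hc; exact h (funext hc)
    exact Finset.prod_eq_zero (Finset.mem_univ i) (by rw [int_fourier, if_neg hi])

theorem charLp2_coeFn (k : Fin n → ℤ) :
    ⇑(charLp2 n k) =ᵐ[(volume : Measure (Torus n))] charFn n k :=
  MemLp.coeFn_toLp _

theorem inner_charLp2 (k l : Fin n → ℤ) :
    ⟪charLp2 n k, charLp2 n l⟫ = if k = l then 1 else 0 := by
  rw [MeasureTheory.L2.inner_def]
  have : ∫ a, ⟪(charLp2 n k : Torus n → ℂ) a, (charLp2 n l : Torus n → ℂ) a⟫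
      = ∫ z : Torus n, charFn n (-k + l) z := by
    apply integral_congr_ae
    filter_upwards [charLp2_coeFn k, charLp2_coeFn l] with z hk hl
    rw [RCLike.inner_apply, hk, hl, charFn_conj, charFn_mul, add_comm]
  rw [this, integral_charFn]
  have he : (-k + l = 0) ↔ k = l := neg_add_eq_zero
  simp only [he]

theorem orthonormal_charLp2 : Orthonormal ℂ (charLp2 n) := by
  rw [orthonormal_iff_ite]
  intro k l
  exact inner_charLp2 k l

/-- Characters as continuous maps. -/
def charCM (n : ℕ) (k : Fin n → ℤ) : C(Torus n, ℂ) := ⟨charFn n k, charFn_continuous n k⟩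

open Algebra in
/-- The star subalgebra generated by the characters. -/
def charStarSubalgebra (n : ℕ) : StarSubalgebra ℂ C(Torus n, ℂ) where
  toSubalgebra := Algebra.adjoin ℂ (range (charCM n))
  star_mem' := by
    show Algebra.adjoin ℂ (range (charCM n)) ≤
      star (Algebra.adjoin ℂ (range (charCM n)))
    refine adjoin_le ?_
    rintro - ⟨k, rfl⟩
    refine Set.mem_star.2 (subset_adjoin ⟨-k, ?_⟩)
    ext1 z
    show charFn n (-k) z = star (charFn n k z)
    rw [← charFn_conj]; rfl

open Algebra in
theorem charStarSubalgebra_coe :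
    Subalgebra.toSubmodule (charStarSubalgebra n).toSubalgebra = span ℂ (range (charCM n)) := by
  apply adjoin_eq_span_of_subset
  refine Subset.trans ?_ Submodule.subset_span
  intro x hx
  refine Submonoid.closure_induction (fun _ => id) ⟨0, ?_⟩ ?_ hx
  · ext1 z; exact congrFun charFn_zero z
  · rintro - - - - ⟨k, rfl⟩ ⟨l, rfl⟩
    refine ⟨k + l, ?_⟩
    ext1 z
    exact (charFn_mul k l z).symm

theorem charStarSubalgebra_separatesPoints : (charStarSubalgebra n).SeparatesPoints := by
  intro z w hzw
  obtain ⟨i, hi⟩ : ∃ i, z i ≠ w i := by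
    by_contra hc; push_neg at hc; exact hzw (funext hc)
  refine ⟨_, ⟨charCM n (Pi.single i 1), Algebra.subset_adjoin ⟨Pi.single i 1, rfl⟩, rfl⟩, ?_⟩
  have hval : ∀ u : Torus n, charCM n (Pi.single i 1) u = (u i).toCircle := by
    intro u
    show charFn n (Pi.single i 1) u = _
    rw [charFn, Finset.prod_eq_single i
      (fun j _ hj => by rw [Pi.single_eq_of_ne hj]; exact fourier_zero)
      (fun h => absurd (Finset.mem_univ i) h)]
    rw [Pi.single_eq_same]
    exact fourier_one
  dsimp only
  rw [hval, hval]
  intro hc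
  rw [Circle.coe_inj] at hc
  exact hi (AddCircle.injective_toCircle one_ne_zero hc)

theorem charStarSubalgebra_closure_eq_top : (charStarSubalgebra n).topologicalClosure = ⊤ :=
  ContinuousMap.starSubalgebra_topologicalClosure_eq_top_of_separatesPoints _
    charStarSubalgebra_separatesPoints

theorem span_charCM_closure_eq_top :
    (span ℂ (range (charCM n))).topologicalClosure = ⊤ := by
  rw [← charStarSubalgebra_coe]
  exact congr_arg (Subalgebra.toSubmodule <| StarSubalgebra.toSubalgebra ·)
    charStarSubalgebra_closure_eq_top

theorem toLp_charCM (k : Fin n → ℤ) :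
    ContinuousMap.toLp (E := ℂ) (2 : ENNReal) (volume : Measure (Torus n)) ℂ (charCM n k) = charLp2 n k := by
  apply MeasureTheory.Lp.ext
  filter_upwards [ContinuousMap.coeFn_toLp (p := (2:ENNReal)) (volume : Measure (Torus n)) (𝕜 := ℂ) (charCM n k),
    charLp2_coeFn k] with z h1 h2
  rw [h1, h2]; rfl

theorem span_charLp2_closure_eq_top :
    (span ℂ (range (charLp2 n))).topologicalClosure = ⊤ := by
  have hmap : Submodule.map
      (ContinuousMap.toLp (E := ℂ) (2 : ENNReal) (volume : Measure (Torus n)) ℂ : C(Torus n, ℂ) →ₗ[ℂ] L2T n)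
      (span ℂ (range (charCM n))) = span ℂ (range (charLp2 n)) := by
    rw [Submodule.map_span]
    congr 1
    rw [← Set.range_comp]
    exact congrArg Set.range (funext fun k => toLp_charCM k)
  rw [← hmap]
  exact (ContinuousMap.toLp_denseRange ℂ (volume : Measure (Torus n)) ℂ
    (by norm_num : (2:ENNReal) ≠ ⊤)).topologicalClosure_map_submodule span_charCM_closure_eq_top

/-- The Hilbert basis of `L²(𝕋^n)` given by the characters. -/
def torusBasis (n : ℕ) : HilbertBasis (Fin n → ℤ) ℂ (L2T n) :=
  HilbertBasis.mk orthonormal_charLp2 (span_charLp2_closure_eq_top ▸ le_rfl)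

theorem torusBasis_coe : ⇑(torusBasis n) = charLp2 n :=
  HilbertBasis.coe_mk _ _

theorem torusBasis_apply (k : Fin n → ℤ) : (torusBasis n) k = charLp2 n k :=
  congrFun torusBasis_coe k

theorem L2ext {x y : L2T n} (h : ∀ k, ⟪charLp2 n k, x⟫ = ⟪charLp2 n k, y⟫) : x = y := by
  apply (torusBasis n).repr.injective
  apply lp.ext
  funext k
  rw [HilbertBasis.repr_apply_apply, HilbertBasis.repr_apply_apply]
  simp only [torusBasis_apply]
  exact h k

theorem parseval (x y : L2T n) :
    HasSum (fun k => ⟪x, charLp2 n k⟫ * ⟪charLp2 n k, y⟫) ⟪x, y⟫ := by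
  have := (torusBasis n).hasSum_inner_mul_inner x y
  simp only [torusBasis_apply] at this
  exact this

end Aux

section Aux2
open Set Submodule

local notation "⟪" x ", " y "⟫" => @inner ℂ _ _ x y

variable {n : ℕ}

theorem memTop_star {φ : Torus n → ℂ} (hφ : MemLp φ ⊤ (volume : Measure (Torus n))) :
    MemLp (fun z => (starRingEnd ℂ) (φ z)) ⊤ (volume : Measure (Torus n)) :=
  hφ.congr_norm
    (show AEStronglyMeasurable (fun z => (starRingEnd ℂ) (φ z)) _ from
      continuous_star.comp_aestronglyMeasurable hφ.aestronglyMeasurable)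
    (Eventually.of_forall fun z => (RCLike.norm_conj _).symm)

theorem mulL2_coeFn {φ : Torus n → ℂ} (hφ : MemLp φ ⊤ (volume : Measure (Torus n)))
    (f : L2T n) :
    ⇑(mulL2 φ hφ f) =ᵐ[(volume : Measure (Torus n))] fun z => φ z * f z :=
  MemLp.coeFn_toLp _

theorem inner_mulL2_left {φ : Torus n → ℂ} (hφ : MemLp φ ⊤ (volume : Measure (Torus n)))
    (x y : L2T n) :
    ⟪mulL2 φ hφ x, y⟫ = ⟪x, mulL2 _ (memTop_star hφ) y⟫ := by
  rw [MeasureTheory.L2.inner_def, MeasureTheory.L2.inner_def]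
  apply integral_congr_ae
  filter_upwards [mulL2_coeFn hφ x, mulL2_coeFn (memTop_star hφ) y] with z h1 h2
  rw [RCLike.inner_apply, RCLike.inner_apply, h1, h2]
  simp only [map_mul]
  ring

theorem mulL2_comm {φ ψ : Torus n → ℂ} (hφ : MemLp φ ⊤ (volume : Measure (Torus n)))
    (hψ : MemLp ψ ⊤ (volume : Measure (Torus n))) (x : L2T n) :
    mulL2 φ hφ (mulL2 ψ hψ x) = mulL2 ψ hψ (mulL2 φ hφ x) := by
  apply MeasureTheory.Lp.ext
  filter_upwards [mulL2_coeFn hφ (mulL2 ψ hψ x), mulL2_coeFn hψ (mulL2 φ hφ x),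
    mulL2_coeFn hψ x, mulL2_coeFn hφ x] with z h1 h2 h3 h4
  rw [h1, h2, h3, h4]
  ring

/-- The element `conj φ · z^k` of `L²`. -/
def mulChar (φ : Torus n → ℂ) (hφ : MemLp φ ⊤ (volume : Measure (Torus n)))
    (k : Fin n → ℤ) : L2T n :=
  mulL2 _ (memTop_star hφ) (charLp2 n k)

theorem inner_charLp2_mulL2 {φ : Torus n → ℂ} (hφ : MemLp φ ⊤ (volume : Measure (Torus n)))
    (k : Fin n → ℤ) (u : L2T n) :
    ⟪charLp2 n k, mulL2 φ hφ u⟫ = ⟪mulChar φ hφ k, u⟫ := by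
  unfold mulChar
  rw [MeasureTheory.L2.inner_def, MeasureTheory.L2.inner_def]
  apply integral_congr_ae
  filter_upwards [mulL2_coeFn hφ u, mulL2_coeFn (memTop_star hφ) (charLp2 n k),
    charLp2_coeFn k] with z h1 h2 h3
  rw [RCLike.inner_apply, RCLike.inner_apply, h1, h2, h3]
  simp only [map_mul, RingHomCompTriple.comp_apply, RingHom.id_apply, Complex.conj_conj]
  ring

theorem inner_mulChar_charLp2 {φ : Torus n → ℂ} (hφ : MemLp φ ⊤ (volume : Measure (Torus n)))
    (k l : Fin n → ℤ) :
    ⟪mulChar φ hφ k, charLp2 n l⟫ = mFourierCoeff φ (k - l) := by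
  unfold mulChar
  rw [MeasureTheory.L2.inner_def, mFourierCoeff]
  apply integral_congr_ae
  filter_upwards [mulL2_coeFn (memTop_star hφ) (charLp2 n k), charLp2_coeFn k,
    charLp2_coeFn l] with z h1 h2 h3
  rw [RCLike.inner_apply, h1, h2, h3]
  simp only [map_mul, Complex.conj_conj]
  rw [charFn_conj, mul_left_comm, charFn_mul, charFn_conj, mul_comm]
  congr 2
  abel

theorem hasSum_coeff_mul {φ : Torus n → ℂ} (hφ : MemLp φ ⊤ (volume : Measure (Torus n)))
    (k : Fin n → ℤ) (u : L2T n) :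
    HasSum (fun l => mFourierCoeff φ (k - l) * ⟪charLp2 n l, u⟫)
      ⟪charLp2 n k, mulL2 φ hφ u⟫ := by
  rw [inner_charLp2_mulL2 hφ k u]
  have := parseval (mulChar φ hφ k) u
  simp only [inner_mulChar_charLp2 hφ k] at this
  exact this

theorem charLp2_mem_hardy {k : Fin n → ℤ} (hk : ¬ ∃ i, k i < 0) :
    charLp2 n k ∈ hardySpace n := by
  intro l hl
  rw [mFourierCoeff_eq_inner, inner_charLp2]
  rw [if_neg]
  rintro rfl
  exact hk hl

/-- `z^k` as an element of the Hardy space, `k ≥ 0`. -/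
def charH {k : Fin n → ℤ} (hk : ¬ ∃ i, k i < 0) : HardyH n := ⟨charLp2 n k, charLp2_mem_hardy hk⟩

theorem hardy_coeff_zero (f : HardyH n) {k : Fin n → ℤ} (hk : ∃ i, k i < 0) :
    ⟪charLp2 n k, (f : L2T n)⟫ = 0 := by
  rw [← mFourierCoeff_eq_inner]
  exact f.2 k hk

theorem coeff_orthProj (u : L2T n) (k : Fin n → ℤ) :
    ⟪charLp2 n k, (Submodule.orthogonalProjectionOnto (hardySpace n) u : L2T n)⟫ =
      if ∃ i, k i < 0 then 0 else ⟪charLp2 n k, u⟫ := by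
  split_ifs with hk
  · exact hardy_coeff_zero _ hk
  · have h0 : ⟪u - (Submodule.orthogonalProjectionOnto (hardySpace n) u : L2T n), charLp2 n k⟫ = 0 :=
      Submodule.starProjection_inner_eq_zero u _ (charLp2_mem_hardy hk)
    have h1 : ⟪charLp2 n k, u - (Submodule.orthogonalProjectionOnto (hardySpace n) u : L2T n)⟫ = 0 := by
      rw [← inner_conj_symm, h0, map_zero]
    rw [inner_sub_right, sub_eq_zero] at h1
    exact h1.symm

theorem mulL2_mem_hardy {φ : Torus n → ℂ} (hφ : MemLp φ ⊤ (volume : Measure (Torus n)))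
    (hφa : IsAnalyticSymbol φ) (f : L2T n) (hf : f ∈ hardySpace n) :
    mulL2 φ hφ f ∈ hardySpace n := by
  intro k hk
  rw [mFourierCoeff_eq_inner]
  have h0 : (fun l => mFourierCoeff φ (k - l) * ⟪charLp2 n l, f⟫) = fun _ => (0:ℂ) := by
    funext l
    by_cases hl : ∃ i, l i < 0
    · rw [← mFourierCoeff_eq_inner, hf l hl, mul_zero]
    · obtain ⟨i, hi⟩ := hk
      push_neg at hl
      have : (k - l) i < 0 := by
        have := hl i
        simp only [Pi.sub_apply]
        omega
      rw [hφa (k - l) ⟨i, this⟩, zero_mul]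
  have := hasSum_coeff_mul hφ k f
  rw [h0] at this
  exact this.unique hasSum_zero

theorem toeplitz_coe {φ : Torus n → ℂ} (hφ : MemLp φ ⊤ (volume : Measure (Torus n)))
    (hφa : IsAnalyticSymbol φ) {T : HardyH n →L[ℂ] HardyH n} (hT : IsToeplitz φ hφ T)
    (f : HardyH n) : (T f : L2T n) = mulL2 φ hφ (f : L2T n) := by
  rw [hT f]
  exact Submodule.starProjection_eq_self_iff.mpr (mulL2_mem_hardy hφ hφa _ f.2)

theorem adjoint_toeplitz_coe {φ : Torus n → ℂ} (hφ : MemLp φ ⊤ (volume : Measure (Torus n)))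
    (hφa : IsAnalyticSymbol φ) {T : HardyH n →L[ℂ] HardyH n} (hT : IsToeplitz φ hφ T)
    (g : HardyH n) :
    ((ContinuousLinearMap.adjoint T g : HardyH n) : L2T n) =
      (Submodule.orthogonalProjectionOnto (hardySpace n) (mulL2 _ (memTop_star hφ) (g : L2T n)) : L2T n) := by
  apply L2ext
  intro k
  rw [coeff_orthProj]
  split_ifs with hk
  · exact hardy_coeff_zero _ hk
  · have h1 : ⟪charLp2 n k, ((ContinuousLinearMap.adjoint T g : HardyH n) : L2T n)⟫ =
        ⟪charH hk, ContinuousLinearMap.adjoint T g⟫ := by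
      rw [Submodule.coe_inner]; rfl
    rw [h1, ContinuousLinearMap.adjoint_inner_right, Submodule.coe_inner,
      toeplitz_coe hφ hφa hT]
    show ⟪mulL2 φ hφ (charLp2 n k), (g : L2T n)⟫ = _
    rw [inner_mulL2_left]

theorem inner_mulL2_unimodular {φ : Torus n → ℂ} (hφ : MemLp φ ⊤ (volume : Measure (Torus n)))
    (hu : ∀ᵐ z ∂(volume : Measure (Torus n)), ‖φ z‖ = 1) (x y : L2T n) :
    ⟪mulL2 φ hφ x, mulL2 φ hφ y⟫ = ⟪x, y⟫ := by
  rw [MeasureTheory.L2.inner_def, MeasureTheory.L2.inner_def]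
  apply integral_congr_ae
  filter_upwards [mulL2_coeFn hφ x, mulL2_coeFn hφ y, hu] with z h1 h2 h3
  rw [RCLike.inner_apply, RCLike.inner_apply, h1, h2]
  have : (starRingEnd ℂ) (φ z) * φ z = 1 := by
    rw [mul_comm, Complex.mul_conj, Complex.normSq_eq_norm_sq, h3]
    norm_num
  calc φ z * y z * (starRingEnd ℂ) (φ z * x z)
      = ((starRingEnd ℂ) (φ z) * φ z) * (y z * (starRingEnd ℂ) (x z)) := by
        simp only [map_mul]; ring
    _ = y z * (starRingEnd ℂ) (x z) := by rw [this, one_mul]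

end Aux2

section Aux3
open Set Submodule

local notation "⟪" x ", " y "⟫" => @inner ℂ _ _ x y

variable {n : ℕ}

theorem mFourierCoeff_star (φ : Torus n → ℂ) (m : Fin n → ℤ) :
    mFourierCoeff (fun z => (starRingEnd ℂ) (φ z)) m = (starRingEnd ℂ) (mFourierCoeff φ (-m)) := by
  rw [mFourierCoeff, mFourierCoeff, ← integral_conj]
  apply integral_congr_ae
  refine Eventually.of_forall fun z => ?_
  simp only [map_mul, Complex.conj_conj]
  rw [charFn_conj]

/-- The key commutation relation: for `φ₁, φ₂ ∈ H^∞` depending on disjoint sets of variables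
and `f ∈ H²`, `P(conj φ₂ · φ₁ f) = φ₁ · P(conj φ₂ · f)`. -/
theorem key_comm {φ₁ φ₂ : Torus n → ℂ} (h1 : MemLp φ₁ ⊤ (volume : Measure (Torus n)))
    (h2 : MemLp φ₂ ⊤ (volume : Measure (Torus n)))
    (h1a : IsAnalyticSymbol φ₁) (h2a : IsAnalyticSymbol φ₂)
    {A B : Set (Fin n)} (hAB : Disjoint A B)
    (hA : DependsOnlyOn φ₁ A) (hB : DependsOnlyOn φ₂ B)
    (f : L2T n) (hf : f ∈ hardySpace n) :
    ((Submodule.orthogonalProjectionOnto (hardySpace n) (mulL2 _ (memTop_star h2) (mulL2 φ₁ h1 f)) : L2T n))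
      = mulL2 φ₁ h1
        (Submodule.orthogonalProjectionOnto (hardySpace n) (mulL2 _ (memTop_star h2) f) : L2T n) := by
  apply L2ext
  intro k
  set v : L2T n := mulL2 _ (memTop_star h2) f with hv_def
  -- coefficients of `v` vanish at any `l` having a negative entry outside `B`
  have hv : ∀ l : Fin n → ℤ, (∃ i, l i < 0 ∧ i ∉ B) → ⟪charLp2 n l, v⟫ = 0 := by
    rintro l ⟨i, hi, hiB⟩
    have h0 : (fun q => mFourierCoeff (fun z => (starRingEnd ℂ) (φ₂ z)) (l - q) *
        ⟪charLp2 n q, f⟫) = fun _ => (0:ℂ) := by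
      funext q
      by_cases hq : ∃ j, q j < 0
      · rw [← mFourierCoeff_eq_inner, hf q hq, mul_zero]
      · push_neg at hq
        rw [mFourierCoeff_star, hB (-(l - q)) ⟨i, hiB, by
          have := hq i
          simp only [Pi.neg_apply, Pi.sub_apply]
          omega⟩, map_zero, zero_mul]
    have hs := hasSum_coeff_mul (memTop_star h2) l f
    rw [h0] at hs
    exact hs.unique hasSum_zero
  rw [coeff_orthProj]
  have hR := hasSum_coeff_mul h1 k
    (Submodule.orthogonalProjectionOnto (hardySpace n) v : L2T n)
  simp only [coeff_orthProj] at hR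
  split_ifs with hk
  · -- `k` has a negative entry: both sides vanish
    obtain ⟨i, hi⟩ := hk
    have h0 : (fun l => mFourierCoeff φ₁ (k - l) *
        (if ∃ j, l j < 0 then 0 else ⟪charLp2 n l, v⟫)) = fun _ => (0:ℂ) := by
      funext l
      by_cases hl : ∃ j, l j < 0
      · rw [if_pos hl, mul_zero]
      · push_neg at hl
        rw [h1a (k - l) ⟨i, by have := hl i; simp only [Pi.sub_apply]; omega⟩, zero_mul]
    rw [h0] at hR
    exact (hR.unique hasSum_zero).symm
  · -- `k ≥ 0`
    push_neg at hk
    have hcomm : mulL2 _ (memTop_star h2) (mulL2 φ₁ h1 f) = mulL2 φ₁ h1 v :=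
      mulL2_comm _ h1 f
    rw [hcomm]
    have hL := hasSum_coeff_mul h1 k v
    have hfun : (fun l => mFourierCoeff φ₁ (k - l) *
        (if ∃ j, l j < 0 then 0 else ⟪charLp2 n l, v⟫)) =
        fun l => mFourierCoeff φ₁ (k - l) * ⟪charLp2 n l, v⟫ := by
      funext l
      by_cases hl : ∃ j, l j < 0
      · rw [if_pos hl, mul_zero]
        obtain ⟨i, hi⟩ := hl
        by_cases hiB : i ∈ B
        · have hiA : i ∉ A := (Set.disjoint_right.mp hAB) hiB
          rw [hA (k - l) ⟨i, hiA, by have := hk i; simp only [Pi.sub_apply]; omega⟩, zero_mul]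
        · rw [hv l ⟨i, hi, hiB⟩, mul_zero]
      · rw [if_neg hl]
    rw [hfun] at hR
    exact (hR.unique hL).symm

end Aux3

set_option maxHeartbeats 2000000 in
/-- equation (3.4). For inner functions `φ₁, φ₂ ∈ H^∞(𝔻^n)` depending on
disjoint sets of variables, `T = T_{φ₁}* T_{φ₂}` satisfies
`T T* = (T_{φ₁}* T_{φ₁})(T_{φ₂} T_{φ₂}*) = P_{φ₂ H²}` and `T* T = T_{φ₁} T_{φ₁}* = P_{φ₁ H²}`;
in particular `T` is a partial isometry with final space `φ₂ H²(𝔻^n)` and initial space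
`φ₁ H²(𝔻^n)`. -/
theorem stmt10 (n : ℕ) (hn : 1 ≤ n) (φ₁ φ₂ : Torus n → ℂ)
    (h₁ : IsInnerFn φ₁) (h₂ : IsInnerFn φ₂)
    (A B : Set (Fin n)) (hAB : Disjoint A B)
    (hA : DependsOnlyOn φ₁ A) (hB : DependsOnlyOn φ₂ B)
    (T₁ T₂ : HardyH n →L[ℂ] HardyH n)
    (hT₁ : IsToeplitz φ₁ h₁.1.1 T₁) (hT₂ : IsToeplitz φ₂ h₂.1.1 T₂)
    (T : HardyH n →L[ℂ] HardyH n)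
    (hTdef : T = ContinuousLinearMap.adjoint T₁ ∘L T₂) :
    T ∘L ContinuousLinearMap.adjoint T =
        (ContinuousLinearMap.adjoint T₁ ∘L T₁) ∘L (T₂ ∘L ContinuousLinearMap.adjoint T₂) ∧
    IsOrthProjOntoMul (T ∘L ContinuousLinearMap.adjoint T) φ₂ ∧
    ContinuousLinearMap.adjoint T ∘L T = T₁ ∘L ContinuousLinearMap.adjoint T₁ ∧
    IsOrthProjOntoMul (ContinuousLinearMap.adjoint T ∘L T) φ₁ ∧
    IsPartialIsometryOp T := by
  have h1a : IsAnalyticSymbol φ₁ := h₁.1.2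
  have h2a : IsAnalyticSymbol φ₂ := h₂.1.2
  have h1u := h₁.2
  have h2u := h₂.2
  -- pointwise descriptions of the operators
  have hc1 : ∀ f : HardyH n, ((T₁ f : L2T n)) = mulL2 φ₁ h₁.1.1 (f : L2T n) :=
    fun f => toeplitz_coe h₁.1.1 h1a hT₁ f
  have hc2 : ∀ f : HardyH n, ((T₂ f : L2T n)) = mulL2 φ₂ h₂.1.1 (f : L2T n) :=
    fun f => toeplitz_coe h₂.1.1 h2a hT₂ f
  have hadj1 : ∀ g : HardyH n, ((ContinuousLinearMap.adjoint T₁ g : HardyH n) : L2T n) =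
      (Submodule.orthogonalProjectionOnto (hardySpace n) (mulL2 _ (memTop_star h₁.1.1) (g : L2T n)) : L2T n) :=
    fun g => adjoint_toeplitz_coe h₁.1.1 h1a hT₁ g
  have hadj2 : ∀ g : HardyH n, ((ContinuousLinearMap.adjoint T₂ g : HardyH n) : L2T n) =
      (Submodule.orthogonalProjectionOnto (hardySpace n) (mulL2 _ (memTop_star h₂.1.1) (g : L2T n)) : L2T n) :=
    fun g => adjoint_toeplitz_coe h₂.1.1 h2a hT₂ g
  -- isometry identities
  have i₁ : ∀ x : HardyH n, ContinuousLinearMap.adjoint T₁ (T₁ x) = x := by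
    intro x
    apply ext_inner_left ℂ
    intro y
    rw [ContinuousLinearMap.adjoint_inner_right, Submodule.coe_inner, Submodule.coe_inner,
      hc1 x, hc1 y, inner_mulL2_unimodular _ h1u]
  have i₂ : ∀ x : HardyH n, ContinuousLinearMap.adjoint T₂ (T₂ x) = x := by
    intro x
    apply ext_inner_left ℂ
    intro y
    rw [ContinuousLinearMap.adjoint_inner_right, Submodule.coe_inner, Submodule.coe_inner,
      hc2 x, hc2 y, inner_mulL2_unimodular _ h2u]
  -- commutation identities
  have d : ∀ x : HardyH n, T₁ (T₂ x) = T₂ (T₁ x) := by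
    intro x
    apply Subtype.ext
    rw [hc1 (T₂ x), hc2 (T₁ x), hc2 x, hc1 x]
    exact mulL2_comm h₁.1.1 h₂.1.1 (x : L2T n)
  have c : ∀ x : HardyH n, ContinuousLinearMap.adjoint T₂ (T₁ x) =
      T₁ (ContinuousLinearMap.adjoint T₂ x) := by
    intro x
    apply Subtype.ext
    rw [hadj2 (T₁ x), hc1 (ContinuousLinearMap.adjoint T₂ x), hadj2 x, hc1 x]
    exact key_comm h₁.1.1 h₂.1.1 h1a h2a hAB hA hB (x : L2T n) x.2
  have cop : ContinuousLinearMap.adjoint T₂ ∘L T₁ = T₁ ∘L ContinuousLinearMap.adjoint T₂ :=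
    ContinuousLinearMap.ext fun x => c x
  have c' : ∀ x : HardyH n, ContinuousLinearMap.adjoint T₁ (T₂ x) =
      T₂ (ContinuousLinearMap.adjoint T₁ x) := by
    have := congrArg ContinuousLinearMap.adjoint cop
    rw [ContinuousLinearMap.adjoint_comp, ContinuousLinearMap.adjoint_comp,
      ContinuousLinearMap.adjoint_adjoint] at this
    intro x
    exact ContinuousLinearMap.ext_iff.mp this x
  -- the two central operator identities
  have hadjT : ContinuousLinearMap.adjoint T = ContinuousLinearMap.adjoint T₂ ∘L T₁ := by
    rw [hTdef, ContinuousLinearMap.adjoint_comp, ContinuousLinearMap.adjoint_adjoint]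
  have hTTstar : T ∘L ContinuousLinearMap.adjoint T = T₂ ∘L ContinuousLinearMap.adjoint T₂ := by
    rw [hadjT, hTdef]
    apply ContinuousLinearMap.ext
    intro x
    simp only [ContinuousLinearMap.comp_apply]
    rw [c x, ← d (ContinuousLinearMap.adjoint T₂ x), i₁]
  have hTstarT : ContinuousLinearMap.adjoint T ∘L T = T₁ ∘L ContinuousLinearMap.adjoint T₁ := by
    rw [hadjT, hTdef]
    apply ContinuousLinearMap.ext
    intro x
    simp only [ContinuousLinearMap.comp_apply]
    rw [c' x, d (ContinuousLinearMap.adjoint T₁ x), i₂]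
  have hI1op : ContinuousLinearMap.adjoint T₁ ∘L T₁ = ContinuousLinearMap.id ℂ (HardyH n) :=
    ContinuousLinearMap.ext fun x => i₁ x
  -- projections onto the ranges
  have hproj : ∀ (ψ : Torus n → ℂ) (hψ : IsInnerFn ψ) (S : HardyH n →L[ℂ] HardyH n),
      IsToeplitz ψ hψ.1.1 S → (∀ x : HardyH n, ContinuousLinearMap.adjoint S (S x) = x) →
      IsOrthProjOntoMul (S ∘L ContinuousLinearMap.adjoint S) ψ := by
    intro ψ hψ S hS hiso
    refine ⟨?_, ?_, ?_⟩
    · show _ = _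
      apply ContinuousLinearMap.ext
      intro x
      simp only [ContinuousLinearMap.mul_apply, ContinuousLinearMap.comp_apply]
      rw [hiso (ContinuousLinearMap.adjoint S x)]
    · show star _ = _
      rw [ContinuousLinearMap.star_eq_adjoint, ContinuousLinearMap.adjoint_comp,
        ContinuousLinearMap.adjoint_adjoint]
    · intro g
      constructor
      · rintro ⟨x, rfl⟩
        refine ⟨ContinuousLinearMap.adjoint S x, ?_⟩
        show ⇑(((S ∘L ContinuousLinearMap.adjoint S) x : HardyH n) : L2T n) =ᵐ[_] _
        have : (((S ∘L ContinuousLinearMap.adjoint S) x : HardyH n) : L2T n) =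
            mulL2 ψ hψ.1.1 ((ContinuousLinearMap.adjoint S x : HardyH n) : L2T n) :=
          toeplitz_coe hψ.1.1 hψ.1.2 hS _
        rw [this]
        exact mulL2_coeFn hψ.1.1 _
      · rintro ⟨h, hh⟩
        have hcoe : (g : L2T n) = mulL2 ψ hψ.1.1 (h : L2T n) := by
          apply MeasureTheory.Lp.ext
          exact hh.trans (mulL2_coeFn hψ.1.1 _).symm
        have hg : g = S h := by
          apply Subtype.ext
          rw [toeplitz_coe hψ.1.1 hψ.1.2 hS, ← hcoe]
        refine ⟨S h, ?_⟩
        show S (ContinuousLinearMap.adjoint S (S h)) = g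
        rw [hiso h, hg]
  refine ⟨?_, ?_, ?_, ?_, ?_⟩
  · rw [hTTstar, hI1op, ContinuousLinearMap.id_comp]
  · rw [hTTstar]
    exact hproj φ₂ h₂ T₂ hT₂ i₂
  · exact hTstarT
  · rw [hTstarT]
    exact hproj φ₁ h₁ T₁ hT₁ i₁
  · -- partial isometry
    intro x hx
    have hQapp : ∀ y : HardyH n, ContinuousLinearMap.adjoint T (T y) =
        T₁ (ContinuousLinearMap.adjoint T₁ y) := by
      intro y
      have := ContinuousLinearMap.ext_iff.mp hTstarT y
      simpa only [ContinuousLinearMap.comp_apply] using this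
    have hTin : ∀ y : HardyH n, @inner ℂ _ _ (T y) (T y) =
        @inner ℂ _ _ y (T₁ (ContinuousLinearMap.adjoint T₁ y)) := by
      intro y
      rw [← hQapp y, ContinuousLinearMap.adjoint_inner_right]
    set Q : HardyH n →L[ℂ] HardyH n := T₁ ∘L ContinuousLinearMap.adjoint T₁ with hQ_def
    have hq : ∀ y : HardyH n, Q y = T₁ (ContinuousLinearMap.adjoint T₁ y) := fun y => rfl
    have hq2 : ∀ y : HardyH n, Q (Q y) = Q y := by
      intro y
      simp only [hq]
      rw [i₁ (ContinuousLinearMap.adjoint T₁ y)]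
    have hker : x - Q x ∈ LinearMap.ker (T : HardyH n →ₗ[ℂ] HardyH n) := by
      rw [LinearMap.mem_ker]
      have h0 : @inner ℂ _ _ (T (x - Q x)) (T (x - Q x)) = 0 := by
        rw [hTin (x - Q x), ← hq, map_sub, hq2 x, sub_self, inner_zero_right]
      exact inner_self_eq_zero.mp h0
    have horth : @inner ℂ _ _ (x - Q x) x = 0 :=
      (Submodule.mem_orthogonal _ x).mp hx (x - Q x) hker
    have hxx : @inner ℂ _ _ x (Q x) = @inner ℂ _ _ x x := by
      rw [inner_sub_left] at horth
      have h1 : @inner ℂ _ _ (Q x) x = @inner ℂ _ _ x x :=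
        (sub_eq_zero.mp horth).symm
      calc @inner ℂ _ _ x (Q x) = (starRingEnd ℂ) (@inner ℂ _ _ (Q x) x) :=
            (inner_conj_symm x (Q x)).symm
        _ = (starRingEnd ℂ) (@inner ℂ _ _ x x) := by rw [h1]
        _ = @inner ℂ _ _ x x := by exact inner_conj_symm x x
    have hinner : @inner ℂ _ _ (T x) (T x) = @inner ℂ _ _ x x := by
      rw [hTin x, ← hq, hxx]
    have hsq' : ‖T x‖^2 = ‖x‖^2 := by
      rw [← @inner_self_eq_norm_sq ℂ, ← @inner_self_eq_norm_sq ℂ, hinner]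
    nlinarith [norm_nonneg (T x), norm_nonneg x]

end
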